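/- Let c ∈ (0,1) with −(1/2)·log(1−c) < 1, let J ≥ 2 be an integer, and let Γ : {1,…,J} × ℤ → ℝ be a function with 0 ≤ Γ(k, I) ≤ 1 for all k and I, Γ(k, I) = 1 whenever I ≤ 0, Γ(1, I) = 0 whenever I ≥ 1, and Γ(k+1, I) ≤ (1−c)^{√I − 1} + I^{1 + (k−1)/2} · Γ(k, ⌊√I⌋ − k + 1) for all 1 ≤ k < J and integers I ≥ 1. Set ε = −(1/2)·log(1−c), c₃ = max(2, −log(1−c)), I₀(ε, J) = ( c₃ · (J·2^J/ε) · log(J·2^J/ε) )^{2^{J−1}}, and I(J) = max( ⌈I₀(ε, J)⌉, ⌈J/c⌉^{2^{J−1}} ). Then Γ(J, I(J)) ≤ exp(−J/2). -/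
import Mathlib


/-- The threshold `I₀(ε,k) = (c₃·(k·2^k/ε)·log(k·2^k/ε))^{2^{k−1}}`. -/
noncomputable def Ithr (c₃ ε : ℝ) (k : ℕ) : ℝ :=
  (c₃ * ((k * 2 ^ k) / ε) * Real.log ((k * 2 ^ k) / ε)) ^ (2 ^ (k - 1))

set_option maxHeartbeats 1000000 in
lemma chain_bound (c ε A : ℝ) (hc0 : 0 < c) (hc1 : c < 1)
    (hε : 2 * ε = -Real.log (1 - c)) (hε0 : 0 < ε)
    (J : ℕ) (hJ : 2 ≤ J) (hA32 : 32 ≤ A) (hAJ : 16 * (J : ℝ) ≤ A)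
    (Γ : ℕ → ℤ → ℝ)
    (hΓ_one : ∀ I : ℤ, 1 ≤ I → Γ 1 I = 0)
    (hrec : ∀ k : ℕ, 1 ≤ k → k < J → ∀ I : ℤ, 1 ≤ I →
      Γ (k + 1) I ≤ (1 - c) ^ (Real.sqrt I - 1)
        + (I : ℝ) ^ (1 + ((k : ℝ) - 1) / 2) * Γ k (⌊Real.sqrt I⌋ - (k : ℤ) + 1)) :
    ∀ k : ℕ, 1 ≤ k → k ≤ J → ∀ I : ℤ,
      A ^ (2 ^ (k - 1)) - 3 * (k : ℝ) ≤ (I : ℝ) → (I : ℝ) ≤ (2 * A) ^ (2 ^ (k - 1)) →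
      Γ k I ≤ ((k : ℝ) - 1) *
        Real.exp (-(2 * ε) * (A - 3) + (((k - 1) * 2 ^ (k - 1) : ℕ) : ℝ) * Real.log (2 * A)) := by
  intro k hk1
  induction k, hk1 using Nat.le_induction with
  | base =>
    intro _ I hlow hup
    have h1 : (1 : ℝ) ≤ (I : ℝ) := by
      norm_num at hlow
      linarith
    rw [hΓ_one I (by exact_mod_cast h1)]
    norm_num
  | succ k hk IH =>
    intro hk1J I hlow hup
    obtain ⟨m, rfl⟩ : ∃ m, k = m + 1 := ⟨k - 1, (Nat.succ_pred_eq_of_pos hk).symm⟩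
    simp only [Nat.add_sub_cancel] at hlow hup ⊢
    have hA1 : (1 : ℝ) ≤ A := by linarith
    have h2A : (1 : ℝ) ≤ 2 * A := by linarith
    have hM0 : 0 ≤ Real.log (2 * A) := Real.log_nonneg h2A
    have hkJ : (m : ℝ) + 2 ≤ (J : ℝ) := by exact_mod_cast hk1J
    have hmA : 16 * ((m : ℝ) + 2) ≤ A := by linarith
    -- powers of A
    have h2le : (2 : ℕ) ≤ 2 ^ (m + 1) := by
      calc (2:ℕ) = 2 ^ 1 := rfl
      _ ≤ 2 ^ (m + 1) := Nat.pow_le_pow_right (by norm_num) (by omega)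
    have hpow1 : A ^ 2 ≤ A ^ (2 ^ (m + 1)) := pow_le_pow_right₀ hA1 h2le
    have hpowm : A ≤ A ^ (2 ^ m) := by
      calc A = A ^ 1 := (pow_one A).symm
      _ ≤ A ^ (2 ^ m) := pow_le_pow_right₀ hA1 Nat.one_le_two_pow
    have hsqid : (A ^ (2 ^ m)) ^ 2 = A ^ (2 ^ (m + 1)) := by
      rw [← pow_mul, pow_succ]
    have hsqid2 : ((2 * A) ^ (2 ^ m)) ^ 2 = (2 * A) ^ (2 ^ (m + 1)) := by
      rw [← pow_mul, pow_succ]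
    have hcast : ((m + 2 : ℕ) : ℝ) = (m : ℝ) + 2 := by push_cast; ring
    have hlow' : A ^ (2 ^ (m + 1)) - 3 * ((m : ℝ) + 2) ≤ (I : ℝ) := by
      rw [show ((m + 1 + 1 : ℕ) : ℝ) = (m : ℝ) + 2 by push_cast; ring] at hlow
      exact hlow
    have hPu : 16 * ((m : ℝ) + 2) ≤ A ^ (2 ^ m) := le_trans hmA hpowm
    -- lower bounds on I
    have hIlow2 : (A - 2) ^ 2 ≤ (I : ℝ) := by nlinarith [hlow', hpow1, hmA, hA32]
    have hI1R : (1 : ℝ) ≤ (I : ℝ) := by nlinarith [hIlow2, hA32]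
    have hI1 : (1 : ℤ) ≤ I := by exact_mod_cast hI1R
    have hI0 : (0 : ℝ) ≤ (I : ℝ) := by linarith
    -- sqrt bounds
    have hsq : A - 2 ≤ Real.sqrt I := by
      rw [show (A - 2 : ℝ) = Real.sqrt ((A - 2) ^ 2) from (Real.sqrt_sq (by linarith)).symm]
      exact Real.sqrt_le_sqrt hIlow2
    have hsqup : Real.sqrt I ≤ (2 * A) ^ (2 ^ m) := by
      calc Real.sqrt I ≤ Real.sqrt (((2 * A) ^ (2 ^ m)) ^ 2) := by
            rw [hsqid2]; exact Real.sqrt_le_sqrt hup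
      _ = (2 * A) ^ (2 ^ m) := Real.sqrt_sq (by positivity)
    have hu0 : (0:ℝ) ≤ (m : ℝ) + 2 := by positivity
    have hmid : A ^ (2 ^ m) - ((m : ℝ) + 2) ≤ Real.sqrt I := by
      have h0 : (0 : ℝ) ≤ A ^ (2 ^ m) - ((m : ℝ) + 2) := by linarith
      have hprod : (0:ℝ) ≤ ((m : ℝ) + 2) * (A ^ (2 ^ m) - 16 * ((m : ℝ) + 2)) :=
        mul_nonneg hu0 (by linarith)
      calc A ^ (2 ^ m) - ((m : ℝ) + 2)
          = Real.sqrt ((A ^ (2 ^ m) - ((m : ℝ) + 2)) ^ 2) := (Real.sqrt_sq h0).symm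
      _ ≤ Real.sqrt I := Real.sqrt_le_sqrt (by nlinarith [hsqid, hlow', hprod, hu0])
    -- the recursion
    have hrecI := hrec (m + 1) (by omega) (by omega) I hI1
    have hfl1 : ((⌊Real.sqrt I⌋ : ℤ) : ℝ) ≤ Real.sqrt I := Int.floor_le _
    have hfl2 : Real.sqrt I - 1 ≤ ((⌊Real.sqrt I⌋ : ℤ) : ℝ) :=
      le_of_lt (Int.sub_one_lt_floor _)
    have hI'cast : ((⌊Real.sqrt I⌋ - ((m + 1 : ℕ) : ℤ) + 1 : ℤ) : ℝ)
        = ((⌊Real.sqrt I⌋ : ℤ) : ℝ) - ((m : ℝ) + 1) + 1 := by push_cast; ring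
    have hI'low : A ^ (2 ^ m) - 3 * ((m + 1 : ℕ) : ℝ) ≤
        ((⌊Real.sqrt I⌋ - ((m + 1 : ℕ) : ℤ) + 1 : ℤ) : ℝ) := by
      rw [hI'cast, show ((m + 1 : ℕ) : ℝ) = (m : ℝ) + 1 by push_cast; ring]
      linarith only [hmid, hfl2]
    have hI'up : ((⌊Real.sqrt I⌋ - ((m + 1 : ℕ) : ℤ) + 1 : ℤ) : ℝ) ≤ (2 * A) ^ (2 ^ m) := by
      rw [hI'cast]
      linarith only [hfl1, hsqup]
    have hΓk := IH (by omega) _ hI'low hI'up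
    -- bound term 1
    have hterm1 : (1 - c) ^ (Real.sqrt I - 1) ≤ Real.exp (-(2 * ε) * (A - 3)) := by
      rw [Real.rpow_def_of_pos (by linarith : (0:ℝ) < 1 - c)]
      apply Real.exp_le_exp.mpr
      have hlc : Real.log (1 - c) = -(2 * ε) := by linarith
      rw [hlc]
      nlinarith [mul_nonneg (le_of_lt hε0)
        (show (0:ℝ) ≤ Real.sqrt I - 1 - (A - 3) by linarith [hsq])]
    -- bound the coefficient
    have hr0 : (0 : ℝ) ≤ 1 + (((m + 1 : ℕ) : ℝ) - 1) / 2 := by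
      rw [show (((m + 1 : ℕ) : ℝ)) - 1 = (m : ℝ) by push_cast; ring]
      positivity
    have hcoef : (I : ℝ) ^ (1 + (((m + 1 : ℕ) : ℝ) - 1) / 2) ≤
        Real.exp ((((m + 2) * 2 ^ m : ℕ) : ℝ) * Real.log (2 * A)) := by
      calc (I : ℝ) ^ (1 + (((m + 1 : ℕ) : ℝ) - 1) / 2)
          ≤ ((2 * A) ^ (2 ^ (m + 1)) : ℝ) ^ (1 + (((m + 1 : ℕ) : ℝ) - 1) / 2) :=
            Real.rpow_le_rpow hI0 hup hr0
      _ = Real.exp ((((2 ^ (m + 1) : ℕ) : ℝ) * Real.log (2 * A)) *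
            (1 + (((m + 1 : ℕ) : ℝ) - 1) / 2)) := by
            rw [Real.rpow_def_of_pos (by positivity)]
            congr 1
            rw [Real.log_pow]
      _ = Real.exp ((((m + 2) * 2 ^ m : ℕ) : ℝ) * Real.log (2 * A)) := by
            congr 1
            push_cast
            ring
    -- put things together
    have hcast2 : (((m + 1 : ℕ) : ℝ)) - 1 = (m : ℝ) := by push_cast; ring
    have hΓk' : Γ (m + 1) (⌊Real.sqrt I⌋ - ((m + 1 : ℕ) : ℤ) + 1) ≤
        (m : ℝ) * Real.exp (-(2 * ε) * (A - 3) +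
          ((m * 2 ^ m : ℕ) : ℝ) * Real.log (2 * A)) := by
      simpa only [Nat.add_sub_cancel, hcast2] using hΓk
    have hINN : (0:ℝ) ≤ (I : ℝ) ^ (1 + (((m + 1 : ℕ) : ℝ) - 1) / 2) :=
      Real.rpow_nonneg hI0 _
    have hterm2 : (I : ℝ) ^ (1 + (((m + 1 : ℕ) : ℝ) - 1) / 2) *
        Γ (m + 1) (⌊Real.sqrt I⌋ - ((m + 1 : ℕ) : ℤ) + 1) ≤
        Real.exp ((((m + 2) * 2 ^ m : ℕ) : ℝ) * Real.log (2 * A)) *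
          ((m : ℝ) * Real.exp (-(2 * ε) * (A - 3) +
            ((m * 2 ^ m : ℕ) : ℝ) * Real.log (2 * A))) := by
      have h1 := mul_le_mul_of_nonneg_left hΓk' hINN
      have h2 := mul_le_mul_of_nonneg_right hcoef
        (show (0:ℝ) ≤ (m : ℝ) * Real.exp (-(2 * ε) * (A - 3) +
          ((m * 2 ^ m : ℕ) : ℝ) * Real.log (2 * A)) by positivity)
      linarith
    have hexpid : Real.exp ((((m + 2) * 2 ^ m : ℕ) : ℝ) * Real.log (2 * A)) *
        Real.exp (-(2 * ε) * (A - 3) + ((m * 2 ^ m : ℕ) : ℝ) * Real.log (2 * A)) =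
        Real.exp (-(2 * ε) * (A - 3) + (((m + 1) * 2 ^ (m + 1) : ℕ) : ℝ) * Real.log (2 * A)) := by
      rw [← Real.exp_add]
      congr 1
      push_cast
      ring
    have hfin : Real.exp (-(2 * ε) * (A - 3)) ≤
        Real.exp (-(2 * ε) * (A - 3) + (((m + 1) * 2 ^ (m + 1) : ℕ) : ℝ) * Real.log (2 * A)) := by
      apply Real.exp_le_exp.mpr
      have h9 : (0:ℝ) ≤ (((m + 1) * 2 ^ (m + 1) : ℕ) : ℝ) * Real.log (2 * A) := by positivity
      linarith
    have hstep : Γ (m + 1 + 1) I ≤ Real.exp (-(2 * ε) * (A - 3)) +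
        (m : ℝ) * Real.exp (-(2 * ε) * (A - 3) +
          (((m + 1) * 2 ^ (m + 1) : ℕ) : ℝ) * Real.log (2 * A)) := by
      calc Γ (m + 1 + 1) I ≤ _ := hrecI
      _ ≤ Real.exp (-(2 * ε) * (A - 3)) +
          Real.exp ((((m + 2) * 2 ^ m : ℕ) : ℝ) * Real.log (2 * A)) *
          ((m : ℝ) * Real.exp (-(2 * ε) * (A - 3) +
            ((m * 2 ^ m : ℕ) : ℝ) * Real.log (2 * A))) := add_le_add hterm1 hterm2
      _ = Real.exp (-(2 * ε) * (A - 3)) +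
          (m : ℝ) * Real.exp (-(2 * ε) * (A - 3) +
            (((m + 1) * 2 ^ (m + 1) : ℕ) : ℝ) * Real.log (2 * A)) := by
          rw [mul_left_comm, hexpid]
    have hgoalcast : ((m + 1 + 1 : ℕ) : ℝ) - 1 = (m : ℝ) + 1 := by push_cast; ring
    rw [hgoalcast]
    calc Γ (m + 1 + 1) I ≤ _ := hstep
    _ ≤ Real.exp (-(2 * ε) * (A - 3) +
          (((m + 1) * 2 ^ (m + 1) : ℕ) : ℝ) * Real.log (2 * A)) +
        (m : ℝ) * Real.exp (-(2 * ε) * (A - 3) +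
          (((m + 1) * 2 ^ (m + 1) : ℕ) : ℝ) * Real.log (2 * A)) := by
        linarith only [hfin]
    _ = ((m : ℝ) + 1) * Real.exp (-(2 * ε) * (A - 3) +
          (((m + 1) * 2 ^ (m + 1) : ℕ) : ℝ) * Real.log (2 * A)) := by ring

set_option maxHeartbeats 2000000 in
/-- Quantitative form of the Corollary `Γ̃_J(I(J)) → 0`: with
`ε = −(1/2)·log(1−c)`, `c₃ = max(2, −log(1−c))` and
`I(J) = max(⌈I₀(ε,J)⌉, ⌈J/c⌉^{2^{J−1}})`, one has `Γ(J, I(J)) ≤ exp(−J/2)`. -/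
theorem gamma_at_IJ_small (c : ℝ) (hc : c ∈ Set.Ioo (0 : ℝ) 1)
    (hε1 : -(1 / 2) * Real.log (1 - c) < 1) (J : ℕ) (hJ : 2 ≤ J)
    (Γ : ℕ → ℤ → ℝ)
    (hΓ01 : ∀ k : ℕ, ∀ I : ℤ, 1 ≤ k → k ≤ J → 0 ≤ Γ k I ∧ Γ k I ≤ 1)
    (hΓ_nonpos : ∀ k : ℕ, ∀ I : ℤ, 1 ≤ k → k ≤ J → I ≤ 0 → Γ k I = 1)
    (hΓ_one : ∀ I : ℤ, 1 ≤ I → Γ 1 I = 0)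
    (hrec : ∀ k : ℕ, 1 ≤ k → k < J → ∀ I : ℤ, 1 ≤ I →
      Γ (k + 1) I ≤ (1 - c) ^ (Real.sqrt I - 1)
        + (I : ℝ) ^ (1 + ((k : ℝ) - 1) / 2) * Γ k (⌊Real.sqrt I⌋ - (k : ℤ) + 1)) :
    Γ J (max ⌈Ithr (max 2 (-Real.log (1 - c))) (-(1 / 2) * Real.log (1 - c)) J⌉
          (⌈(J : ℝ) / c⌉ ^ (2 ^ (J - 1))))
      ≤ Real.exp (-(J : ℝ) / 2) := by
  obtain ⟨hc0, hc1⟩ := hc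
  set ε := -(1 / 2) * Real.log (1 - c) with hεdef
  have hlogc : Real.log (1 - c) < 0 := Real.log_neg (by linarith) (by linarith)
  have hε0 : 0 < ε := by rw [hεdef]; linarith only [hlogc]
  have h2ε : 2 * ε = -Real.log (1 - c) := by rw [hεdef]; ring
  have hεlt1 : ε < 1 := hε1
  have hmax : max 2 (-Real.log (1 - c)) = (2 : ℝ) := max_eq_left (by linarith)
  simp only [Ithr, hmax]
  set X := ((J : ℝ) * 2 ^ J) / ε with hXdef
  set L := Real.log X with hLdef
  set B := 2 * X * L with hBdef
  set A := max B ((J : ℝ) / c) with hAdef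
  set M := Real.log (2 * A) with hMdef
  -- basic numeric facts
  have hJR : (2 : ℝ) ≤ (J : ℝ) := by exact_mod_cast hJ
  have h2J4 : (4 : ℝ) ≤ 2 ^ J := by
    calc (4:ℝ) = 2 ^ 2 := by norm_num
    _ ≤ 2 ^ J := pow_le_pow_right₀ one_le_two hJ
  have hJ2J : (8 : ℝ) ≤ (J : ℝ) * 2 ^ J := by
    have h := mul_le_mul hJR h2J4 (by norm_num : (0:ℝ) ≤ 4) (by linarith : (0:ℝ) ≤ (J:ℝ))
    linarith only [h]
  have hX8 : (8 : ℝ) ≤ X := by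
    rw [hXdef, le_div_iff₀ hε0]
    linarith only [hJ2J, hεlt1, hε0]
  have hX0 : (0 : ℝ) < X := by linarith
  have hεX : ε * X = (J : ℝ) * 2 ^ J := by
    rw [hXdef]; field_simp
  have hL2 : (2 : ℝ) ≤ L := by
    rw [hLdef]
    have h8 : (2 : ℝ) ≤ Real.log 8 := by
      rw [show (8:ℝ) = 2 ^ 3 by norm_num, Real.log_pow]
      push_cast
      linarith only [Real.log_two_gt_d9]
    calc (2:ℝ) ≤ Real.log 8 := h8
    _ ≤ Real.log X := Real.log_le_log (by norm_num) hX8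
  have hXL : 2 * X ≤ X * L := by
    have := mul_le_mul_of_nonneg_left hL2 (le_of_lt hX0)
    linarith
  have hB32 : (32 : ℝ) ≤ B := by rw [hBdef]; linarith
  have hBA : B ≤ A := le_max_left _ _
  have hA32 : (32 : ℝ) ≤ A := le_trans hB32 hBA
  have hX4J : 4 * (J : ℝ) ≤ X := by
    rw [hXdef, le_div_iff₀ hε0]
    have u1 := mul_nonneg (by linarith : (0:ℝ) ≤ (J:ℝ)) (by linarith : (0:ℝ) ≤ 1 - ε)
    have u2 := mul_nonneg (by linarith : (0:ℝ) ≤ (J:ℝ)) (by linarith : (0:ℝ) ≤ (2:ℝ)^J - 4)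
    linarith only [u1, u2]
  have hAJ : 16 * (J : ℝ) ≤ A := by
    have hb : B = 2 * X * L := hBdef
    linarith [hX4J, hXL, hBA]
  have hA0 : (0 : ℝ) < A := by linarith
  have hM0 : (0 : ℝ) ≤ M := Real.log_nonneg (by linarith)
  -- bounds on the integer argument
  have hn1 : 1 ≤ 2 ^ (J - 1) := Nat.one_le_two_pow
  have hn2 : (2 : ℕ) ≤ 2 ^ (J - 1) := by
    calc (2:ℕ) = 2 ^ 1 := rfl
    _ ≤ 2 ^ (J - 1) := Nat.pow_le_pow_right (by norm_num) (by omega)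
  have hJc0 : (0 : ℝ) < (J : ℝ) / c := by positivity
  have hJcA : (J : ℝ) / c ≤ A := le_max_right _ _
  have hB1 : (1 : ℝ) ≤ B := by linarith
  set n := 2 ^ (J - 1) with hndef
  set Iv : ℤ := max ⌈B ^ n⌉ (⌈(J : ℝ) / c⌉ ^ n) with hIvdef
  have hIvcast : ((Iv : ℤ) : ℝ) = max ((⌈B ^ n⌉ : ℤ) : ℝ) (((⌈(J : ℝ) / c⌉ ^ n : ℤ) : ℤ) : ℝ) := by
    rw [hIvdef]
    push_cast
    try ring_nf
    try exact Int.cast_max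
  have hlowIv : A ^ n ≤ (Iv : ℝ) := by
    rw [hIvcast]
    rcases le_total ((J : ℝ) / c) B with h | h
    · have hAB : A = B := max_eq_left h
      calc A ^ n = B ^ n := by rw [hAB]
      _ ≤ ((⌈B ^ n⌉ : ℤ) : ℝ) := Int.le_ceil _
      _ ≤ _ := le_max_left _ _
    · have hAB : A = (J : ℝ) / c := max_eq_right h
      calc A ^ n = ((J : ℝ) / c) ^ n := by rw [hAB]
      _ ≤ ((⌈(J : ℝ) / c⌉ : ℤ) : ℝ) ^ n :=
          pow_le_pow_left₀ (le_of_lt hJc0) (Int.le_ceil _) n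
      _ = (((⌈(J : ℝ) / c⌉ ^ n : ℤ) : ℤ) : ℝ) := by push_cast; ring
      _ ≤ _ := le_max_right _ _
  have hupIv : (Iv : ℝ) ≤ (2 * A) ^ n := by
    rw [hIvcast]
    apply max_le
    · have h1 : (1 : ℝ) ≤ B ^ n := by
        calc (1:ℝ) = B ^ 0 := (pow_zero B).symm
        _ ≤ B ^ n := pow_le_pow_right₀ hB1 (Nat.zero_le n)
      have h2 : ((⌈B ^ n⌉ : ℤ) : ℝ) ≤ B ^ n + 1 := le_of_lt (Int.ceil_lt_add_one _)
      have h3 : B ^ n + 1 ≤ 2 * B ^ n := by linarith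
      have h4 : (2 : ℝ) * B ^ n ≤ 2 ^ n * B ^ n := by
        have : (2 : ℝ) ≤ 2 ^ n := by
          calc (2:ℝ) = 2 ^ 1 := by norm_num
          _ ≤ 2 ^ n := pow_le_pow_right₀ one_le_two (by omega)
        have u := mul_nonneg (by linarith : (0:ℝ) ≤ (2:ℝ)^n - 2)
          (pow_nonneg (by linarith : (0:ℝ) ≤ B) n)
        linarith only [u]
      have h5 : (2 : ℝ) ^ n * B ^ n = (2 * B) ^ n := (mul_pow 2 B n).symm
      have h6 : (2 * B : ℝ) ^ n ≤ (2 * A) ^ n :=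
        pow_le_pow_left₀ (by linarith) (by linarith) n
      linarith
    · have h1 : (((⌈(J : ℝ) / c⌉ ^ n : ℤ) : ℤ) : ℝ) = ((⌈(J : ℝ) / c⌉ : ℤ) : ℝ) ^ n := by
        push_cast; ring
      rw [h1]
      have h2 : ((⌈(J : ℝ) / c⌉ : ℤ) : ℝ) ≤ (J : ℝ) / c + 1 := le_of_lt (Int.ceil_lt_add_one _)
      have h3 : (0 : ℝ) ≤ ((⌈(J : ℝ) / c⌉ : ℤ) : ℝ) := by
        have := Int.le_ceil ((J : ℝ) / c); linarith
      calc ((⌈(J : ℝ) / c⌉ : ℤ) : ℝ) ^ n ≤ ((J : ℝ) / c + 1) ^ n :=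
          pow_le_pow_left₀ h3 h2 n
      _ ≤ (2 * A) ^ n := pow_le_pow_left₀ (by linarith) (by linarith) n
  -- apply the chain bound
  have hΓJ := chain_bound c ε A hc0 hc1 h2ε hε0 J hJ hA32 hAJ Γ hΓ_one hrec J
    (by omega) le_rfl Iv (by
      have h3J : (0:ℝ) ≤ 3 * (J : ℝ) := by positivity
      rw [← hndef]; linarith only [hlowIv, h3J]) (by rw [← hndef]; exact hupIv)
  -- final numeric estimate
  have hpow2 : (2 : ℝ) ≤ 2 ^ (J - 1) := by
    calc (2:ℝ) = 2 ^ 1 := by norm_num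
    _ ≤ 2 ^ (J - 1) := pow_le_pow_right₀ one_le_two (by omega)
  have hpowJ : (2 : ℝ) ^ J = 2 * 2 ^ (J - 1) := by
    obtain ⟨r, hr⟩ : ∃ r, J = r + 1 := ⟨J - 1, by omega⟩
    subst hr
    simp [pow_succ]
    ring
  have scast : (((J - 1) * 2 ^ (J - 1) : ℕ) : ℝ) = ((J : ℝ) - 1) * 2 ^ (J - 1) := by
    push_cast [Nat.cast_sub (by omega : 1 ≤ J)]
    ring
  have hεX' : ε * X = 2 * ((J : ℝ) * 2 ^ (J - 1)) := by rw [hεX, hpowJ]; ring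
  -- log-linearization of M
  have hlog_lin : ∀ a b : ℝ, 0 < a → 0 < b → Real.log a ≤ Real.log b + a / b - 1 := by
    intro a b ha hb
    have h := Real.log_le_sub_one_of_pos (div_pos ha hb)
    rw [Real.log_div (ne_of_gt ha) (ne_of_gt hb)] at h
    linarith
  have hL0 : (0:ℝ) < L := by linarith
  have hlog4XL : Real.log (4 * X * L) ≤ 3 + L + (L - 1) := by
    rw [Real.log_mul (by positivity) (ne_of_gt hL0), Real.log_mul (by norm_num) (ne_of_gt hX0)]
    have h4 : Real.log 4 ≤ 3 := by nlinarith [Real.log_le_sub_one_of_pos (show (0:ℝ) < 4 by norm_num)]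
    have hLL : Real.log L ≤ L - 1 := Real.log_le_sub_one_of_pos hL0
    rw [← hLdef]
    linarith
  have hMla : M ≤ 2 * L + 1 + A / (4 * X) := by
    have h1 : Real.log (2 * A) ≤ Real.log (4 * X * L) + (2 * A) / (4 * X * L) - 1 :=
      hlog_lin (2 * A) (4 * X * L) (by linarith) (by positivity)
    have h2 : (2 * A) / (4 * X * L) ≤ A / (4 * X) := by
      rw [div_le_div_iff₀ (by positivity) (by positivity)]
      have u := mul_nonneg (mul_nonneg (le_of_lt hA0) (le_of_lt hX0)) (sub_nonneg.mpr hL2)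
      linarith only [u]
    rw [hMdef]
    linarith
  have hS : (3 / 8) * X + (X / 2) * M + 6 ≤ 2 * A := by
    have hXM : (X / 2) * M ≤ (X / 2) * (2 * L + 1 + A / (4 * X)) :=
      mul_le_mul_of_nonneg_left hMla (by positivity)
    have hexp : (X / 2) * (2 * L + 1 + A / (4 * X)) = X * L + X / 2 + A / 8 := by
      field_simp
      ring
    rw [hexp] at hXM
    have hb : B = 2 * X * L := hBdef
    linarith [hXM, hBA, hXL, hX8]
  -- assemble
  have hJpos : (0 : ℝ) < (J : ℝ) := by linarith
  have hlogJ : Real.log J ≤ (J : ℝ) - 1 := Real.log_le_sub_one_of_pos hJpos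
  have hs : ((J : ℝ) - 1) * 2 ^ (J - 1) ≤ ε * X / 2 := by linarith [hεX', hpow2]
  have hsM : ((J : ℝ) - 1) * 2 ^ (J - 1) * M ≤ (ε * X / 2) * M :=
    mul_le_mul_of_nonneg_right hs hM0
  have hSε : ε * ((X / 2) * M) ≤ ε * (2 * A - 6 - (3 / 8) * X) :=
    mul_le_mul_of_nonneg_left (by linarith) (le_of_lt hε0)
  have hJX : 3 / 2 * (J:ℝ) ≤ 3 / 8 * (ε * X) := by
    rw [hεX']
    have u := mul_nonneg (by linarith : (0:ℝ) ≤ (J:ℝ)) (by linarith : (0:ℝ) ≤ (2:ℝ)^(J-1) - 2)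
    linarith only [u]
  have hNUM : Real.log J + (-(2 * ε) * (A - 3) +
      (((J - 1) * 2 ^ (J - 1) : ℕ) : ℝ) * M) ≤ -(J : ℝ) / 2 := by
    rw [scast]
    linarith [hsM, hSε, hJX, hlogJ]
  have hJexp : ((J : ℝ) - 1) ≤ Real.exp (Real.log J) := by
    rw [Real.exp_log hJpos]; linarith
  calc Γ J Iv ≤ ((J : ℝ) - 1) *
        Real.exp (-(2 * ε) * (A - 3) + (((J - 1) * 2 ^ (J - 1) : ℕ) : ℝ) * M) := hΓJ
  _ ≤ Real.exp (Real.log J) *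
        Real.exp (-(2 * ε) * (A - 3) + (((J - 1) * 2 ^ (J - 1) : ℕ) : ℝ) * M) :=
      mul_le_mul_of_nonneg_right hJexp (le_of_lt (Real.exp_pos _))
  _ = Real.exp (Real.log J + (-(2 * ε) * (A - 3) +
        (((J - 1) * 2 ^ (J - 1) : ℕ) : ℝ) * M)) := (Real.exp_add _ _).symm
  _ ≤ Real.exp (-(J : ℝ) / 2) := Real.exp_le_exp.mpr hNUM
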